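/- Let f be an entropy generator. Then the sequence n ↦ −n·f(1/n) (which equals H_f(U_n), the f-entropy of the uniform distribution on n points) is strictly increasing in n and converges to −f'(0) as n → ∞; consequently, the supremum of H_f(P) over all probability distributions P on ℕ equals −f'(0). -/

import Mathlib

/-- A probability distribution on ℕ: nonnegative weights summing to 1. -/
def IsProbDist (p : ℕ → ℝ) : Prop := (∀ i, 0 ≤ p i) ∧ HasSum p 1

/-- An entropy generator: real analytic on `[0,∞)`, strictly convex on `[0,∞)`,
with `f 0 = f 1 = 0` and `f' 1 = 1`. -/
def IsEntropyGenerator (f : ℝ → ℝ) : Prop :=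
  (∀ x ∈ Set.Ici (0 : ℝ), AnalyticAt ℝ f x) ∧
  StrictConvexOn ℝ (Set.Ici (0 : ℝ)) f ∧
  f 0 = 0 ∧ f 1 = 0 ∧ deriv f 1 = 1

open Filter Topology in
theorem stmt8 (f : ℝ → ℝ) (hf : IsEntropyGenerator f) :
    StrictMonoOn (fun n : ℕ => -(n : ℝ) * f (1 / (n : ℝ))) (Set.Ici 1) ∧
    Filter.Tendsto (fun n : ℕ => -(n : ℝ) * f (1 / (n : ℝ))) Filter.atTop
      (nhds (-deriv f 0)) ∧
    IsLUB {x : ℝ | ∃ p : ℕ → ℝ, IsProbDist p ∧ x = -∑' i, f (p i)}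
      (-deriv f 0) := by
  obtain ⟨hAn, hConv, hf0, hf1, _⟩ := hf
  -- strict slope monotonicity from 0
  have hslope : ∀ x y : ℝ, 0 < x → x < y → f x / x < f y / y := by
    intro x y hx hxy
    have := hConv.secant_strict_mono (a := 0) (x := x) (y := y) Set.self_mem_Ici hx.le
      (hx.trans hxy).le hx.ne' (hx.trans hxy).ne' hxy
    simpa [hf0] using this
  have hslope_le : ∀ x y : ℝ, 0 < x → x ≤ y → f x / x ≤ f y / y := by
    intro x y hx hxy
    rcases eq_or_lt_of_le hxy with rfl | h
    · exact le_rfl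
    · exact (hslope x y hx h).le
  -- derivative at 0
  have hderiv : HasDerivAt f (deriv f 0) 0 :=
    ((hAn 0 Set.self_mem_Ici).differentiableAt).hasDerivAt
  -- the key limit : n * f (1/n) → deriv f 0
  have hlim : Tendsto (fun n : ℕ => (n : ℝ) * f (1 / (n : ℝ))) atTop (𝓝 (deriv f 0)) := by
    have h1 : Tendsto (fun n : ℕ => (1 : ℝ) / (n : ℝ)) atTop (𝓝[≠] 0) := by
      apply tendsto_nhdsWithin_of_tendsto_nhds_of_eventually_within
      · exact tendsto_one_div_atTop_nhds_zero_nat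
      · filter_upwards [eventually_ge_atTop 1] with n hn
        have : (0:ℝ) < (n:ℝ) := by positivity
        simp [Set.mem_compl_singleton_iff, one_div, inv_ne_zero this.ne']
    have h2 := (hasDerivAt_iff_tendsto_slope.mp hderiv).comp h1
    apply h2.congr'
    filter_upwards [eventually_ge_atTop 1] with n hn
    have hn0 : (0:ℝ) < (n:ℝ) := by exact_mod_cast hn
    simp only [Function.comp, slope_def_field, hf0]
    field_simp
    ring
  have htends : Tendsto (fun n : ℕ => -(n : ℝ) * f (1 / (n : ℝ))) atTop (𝓝 (-deriv f 0)) := by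
    simpa [neg_mul] using hlim.neg
  -- convexity inequality: deriv f 0 * x ≤ f x for x ≥ 0
  have hkey : ∀ x : ℝ, 0 ≤ x → deriv f 0 * x ≤ f x := by
    intro x hx
    rcases eq_or_lt_of_le hx with rfl | hx
    · simp [hf0]
    have hle : deriv f 0 ≤ f x / x := by
      refine le_of_tendsto hlim ?_
      filter_upwards [eventually_ge_atTop (max 1 ⌈1/x⌉₊)] with n hn
      have hn1 : (1:ℕ) ≤ n := le_trans (le_max_left _ _) hn
      have hn0 : (0:ℝ) < (n:ℝ) := by exact_mod_cast hn1
      have hxn : 1 / (n:ℝ) ≤ x := by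
        rw [div_le_iff₀ hn0]
        have : (⌈1/x⌉₊ : ℝ) ≤ (n:ℝ) := by exact_mod_cast le_trans (le_max_right _ _) hn
        have h2 : 1/x ≤ (n:ℝ) := le_trans (Nat.le_ceil _) this
        calc (1:ℝ) = x * (1/x) := by field_simp
        _ ≤ x * n := by nlinarith [one_div_pos.mpr hx]
      have := hslope_le (1/(n:ℝ)) x (by positivity) hxn
      calc (n:ℝ) * f (1/(n:ℝ)) = f (1/(n:ℝ)) / (1/(n:ℝ)) := by field_simp
      _ ≤ f x / x := this
    calc deriv f 0 * x ≤ (f x / x) * x := by nlinarith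
    _ = f x := by field_simp
  have hd0 : deriv f 0 ≤ 0 := by
    have := hkey 1 zero_le_one
    simpa [hf1] using this
  refine ⟨?_, htends, ?_, ?_⟩
  · -- strict mono
    intro m hm n hn hmn
    have hm1 : (1:ℕ) ≤ m := hm
    have hm0 : (0:ℝ) < (m:ℝ) := by exact_mod_cast hm1
    have hn0 : (0:ℝ) < (n:ℝ) := lt_trans hm0 (by exact_mod_cast hmn)
    have hlt : 1/(n:ℝ) < 1/(m:ℝ) := by
      apply one_div_lt_one_div_of_lt hm0; exact_mod_cast hmn
    have := hslope (1/(n:ℝ)) (1/(m:ℝ)) (by positivity) hlt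
    have e1 : f (1/(n:ℝ)) / (1/(n:ℝ)) = (n:ℝ) * f (1/(n:ℝ)) := by field_simp
    have e2 : f (1/(m:ℝ)) / (1/(m:ℝ)) = (m:ℝ) * f (1/(m:ℝ)) := by field_simp
    simp only [neg_mul]
    rw [e1, e2] at this
    linarith
  · -- upper bound
    rintro x ⟨p, ⟨hp0, hpsum⟩, rfl⟩
    by_cases hsum : Summable fun i => f (p i)
    · have h1 : ∀ i, deriv f 0 * p i ≤ f (p i) := fun i => hkey (p i) (hp0 i)
      have h2 : ∑' i, deriv f 0 * p i ≤ ∑' i, f (p i) :=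
        Summable.tsum_le_tsum h1 ((hpsum.summable).mul_left _) hsum
      have h3 : ∑' i, deriv f 0 * p i = deriv f 0 := by
        rw [tsum_mul_left, hpsum.tsum_eq, mul_one]
      linarith [h2, h3.symm.le]
    · rw [tsum_eq_zero_of_not_summable hsum]
      simpa using hd0
  · -- least upper bound
    intro b hb
    refine le_of_tendsto htends ?_
    filter_upwards [eventually_ge_atTop 1] with n hn
    apply hb
    refine ⟨fun i => if i < n then 1/(n:ℝ) else 0, ⟨fun i => by positivity, ?_⟩, ?_⟩
    · have h0 : ∀ i ∉ Finset.range n, (if i < n then 1/(n:ℝ) else 0) = 0 := by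
        intro i hi; simp [Finset.mem_range] at hi; simp [not_lt.mpr hi, hi.not_gt]
      have := hasSum_sum_of_ne_finset_zero (s := Finset.range n) (L := SummationFilter.unconditional ℕ)
        (f := fun i => if i < n then 1/(n:ℝ) else 0) h0
      have hn0 : (0:ℝ) < (n:ℝ) := by exact_mod_cast hn
      have hs : ∑ i ∈ Finset.range n, (if i < n then 1/(n:ℝ) else 0) = 1 := by
        rw [Finset.sum_ite_of_true (by intro i hi; simpa [Finset.mem_range] using hi)]
        simp [Finset.sum_const]
        field_simp
      rwa [hs] at this
    · have hts : ∑' i, f (if i < n then 1/(n:ℝ) else 0) =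
          ∑ i ∈ Finset.range n, f (if i < n then 1/(n:ℝ) else 0) := by
        apply tsum_eq_sum
        intro i hi
        simp [Finset.mem_range] at hi
        simp [not_lt.mpr hi, hi.not_gt, hf0]
      rw [hts]
      have hss : ∑ i ∈ Finset.range n, f (if i < n then 1/(n:ℝ) else 0)
          = (n:ℝ) * f (1/(n:ℝ)) := by
        rw [show (∑ i ∈ Finset.range n, f (if i < n then 1/(n:ℝ) else 0))
            = ∑ _i ∈ Finset.range n, f (1/(n:ℝ)) from
          Finset.sum_congr rfl (fun i hi => by rw [if_pos (Finset.mem_range.mp hi)])]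
        simp [Finset.sum_const]
      rw [hss]; ring
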